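/- Let φ be a formula of TL[#←,Y,MOD] of depth at most k over the alphabet Σ ∪ {e}, where e ∉ Σ. Then there exist an integer x ≥ 1 and a TL[#←] formula φ' of depth at most k over Σ such that, defining the mapping f : Σ* → (Σ ∪ {e})* by f(w1 w2 ⋯ wn) = e^x w1 e^{x−1} w2 e^{x−1} ⋯ wn e^{x−1}, for all nonempty w ∈ Σ*: f(w) ⊨ φ if and only if w ⊨ φ'. -/

import Mathlib

mutual
  /-- Formulas of TL[#←,Y,MOD]: TL with counting, the previous-position operator `Y`,
  and the positional predicates `MOD_m^r`. -/
  inductive YFormula (σ : Type) : Type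
    | sym : σ → YFormula σ
    | mod : ℕ → ℕ → YFormula σ
    | yop : YFormula σ → YFormula σ
    | lt : YTerm σ → YTerm σ → YFormula σ
    | not : YFormula σ → YFormula σ
    | and : YFormula σ → YFormula σ → YFormula σ
  /-- Terms of TL[#←,Y,MOD]. -/
  inductive YTerm (σ : Type) : Type
    | countL : YFormula σ → YTerm σ
    | add : YTerm σ → YTerm σ → YTerm σ
    | one : YTerm σ
end

mutual
  /-- Satisfaction `w,i ⊨ φ` (positions are 0-indexed, `0 ≤ i < |w|`):
  `MOD_m^r` holds at the (1-indexed) position `i+1` iff `i+1 ≡ r (mod m)`, and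
  `Yφ` holds at position `i` iff `i > 0` and `φ` holds at position `i−1`. -/
  def YFormula.sat {σ : Type} [DecidableEq σ] : YFormula σ → List σ → ℕ → Bool
    | .sym c, w, i => decide (w[i]? = some c)
    | .mod m r, _, i => decide ((i + 1) % m = r % m)
    | .yop φ, w, i => decide (0 < i) && YFormula.sat φ w (i - 1)
    | .lt t₁ t₂, w, i => decide (YTerm.val t₁ w i < YTerm.val t₂ w i)
    | .not φ, w, i => !(YFormula.sat φ w i)
    | .and φ₁ φ₂, w, i => YFormula.sat φ₁ w i && YFormula.sat φ₂ w i
  /-- Value `t^{w,i}` of a term; `#←[φ]^{w,i}` counts positions `j ≤ i` with `w,j ⊨ φ`. -/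
  def YTerm.val {σ : Type} [DecidableEq σ] : YTerm σ → List σ → ℕ → ℕ
    | .countL φ, w, i => ((List.range (i + 1)).filter (fun j => YFormula.sat φ w j)).length
    | .add t₁ t₂, w, i => YTerm.val t₁ w i + YTerm.val t₂ w i
    | .one, _, _ => 1
end

mutual
  /-- Nesting depth of `#←` in a formula (`Y` and `MOD` do not count). -/
  def YFormula.depth {σ : Type} : YFormula σ → ℕ
    | .sym _ => 0
    | .mod _ _ => 0
    | .yop φ => YFormula.depth φ
    | .lt t₁ t₂ => max (YTerm.depth t₁) (YTerm.depth t₂)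
    | .not φ => YFormula.depth φ
    | .and φ₁ φ₂ => max (YFormula.depth φ₁) (YFormula.depth φ₂)
  /-- Nesting depth of `#←` in a term. -/
  def YTerm.depth {σ : Type} : YTerm σ → ℕ
    | .countL φ => YFormula.depth φ + 1
    | .add t₁ t₂ => max (YTerm.depth t₁) (YTerm.depth t₂)
    | .one => 0
end

/-- A formula of the form `Y^c Q_σ` or `Y^c MOD_m^r` for some `c ≥ 0`. -/
def YFormula.isYAtom {σ : Type} : YFormula σ → Prop
  | .sym _ => True
  | .mod _ _ => True
  | .yop φ => YFormula.isYAtom φ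
  | _ => False

mutual
  /-- `Y`-normal form: the operator `Y` is only applied (iterated) to the atomic
  formulas `Q_σ` and `MOD_m^r`. -/
  def YFormula.inYNF {σ : Type} : YFormula σ → Prop
    | .sym _ => True
    | .mod _ _ => True
    | .yop φ => YFormula.isYAtom φ
    | .lt t₁ t₂ => YTerm.inYNF t₁ ∧ YTerm.inYNF t₂
    | .not φ => YFormula.inYNF φ
    | .and φ₁ φ₂ => YFormula.inYNF φ₁ ∧ YFormula.inYNF φ₂
  /-- `Y`-normal form for terms. -/
  def YTerm.inYNF {σ : Type} : YTerm σ → Prop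
    | .countL φ => YFormula.inYNF φ
    | .add t₁ t₂ => YTerm.inYNF t₁ ∧ YTerm.inYNF t₂
    | .one => True
end


mutual
  /-- Formulas of TL[#←]. -/
  inductive TLFormula (σ : Type) : Type
    | sym : σ → TLFormula σ
    | lt : TLTerm σ → TLTerm σ → TLFormula σ
    | not : TLFormula σ → TLFormula σ
    | and : TLFormula σ → TLFormula σ → TLFormula σ
  /-- Terms of TL[#←]. -/
  inductive TLTerm (σ : Type) : Type
    | countL : TLFormula σ → TLTerm σ
    | add : TLTerm σ → TLTerm σ → TLTerm σ
    | one : TLTerm σ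
end

mutual
  /-- Satisfaction `w,i ⊨ φ` (positions are 0-indexed, `0 ≤ i < |w|`). -/
  def TLFormula.sat {σ : Type} [DecidableEq σ] : TLFormula σ → List σ → ℕ → Bool
    | .sym c, w, i => decide (w[i]? = some c)
    | .lt t₁ t₂, w, i => decide (TLTerm.val t₁ w i < TLTerm.val t₂ w i)
    | .not φ, w, i => !(TLFormula.sat φ w i)
    | .and φ₁ φ₂, w, i => TLFormula.sat φ₁ w i && TLFormula.sat φ₂ w i
  /-- Value `t^{w,i}` of a term; `#←[φ]^{w,i}` counts positions `j ≤ i` with `w,j ⊨ φ`. -/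
  def TLTerm.val {σ : Type} [DecidableEq σ] : TLTerm σ → List σ → ℕ → ℕ
    | .countL φ, w, i => ((List.range (i + 1)).filter (fun j => TLFormula.sat φ w j)).length
    | .add t₁ t₂, w, i => TLTerm.val t₁ w i + TLTerm.val t₂ w i
    | .one, _, _ => 1
end

mutual
  /-- Nesting depth of `#←` in a formula. -/
  def TLFormula.depth {σ : Type} : TLFormula σ → ℕ
    | .sym _ => 0
    | .lt t₁ t₂ => max (TLTerm.depth t₁) (TLTerm.depth t₂)
    | .not φ => TLFormula.depth φ
    | .and φ₁ φ₂ => max (TLFormula.depth φ₁) (TLFormula.depth φ₂)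
  /-- Nesting depth of `#←` in a term. -/
  def TLTerm.depth {σ : Type} : TLTerm σ → ℕ
    | .countL φ => TLFormula.depth φ + 1
    | .add t₁ t₂ => max (TLTerm.depth t₁) (TLTerm.depth t₂)
    | .one => 0
end

/-- `φ` defines `L`: a nonempty string is in `L` iff `φ` is satisfied at its last position. -/
def TLFormula.defines {σ : Type} [DecidableEq σ] (φ : TLFormula σ) (L : Set (List σ)) : Prop :=
  ∀ w : List σ, w ≠ [] → (w ∈ L ↔ φ.sat w (w.length - 1) = true)


/-- The padding map `f(w₁w₂⋯wₙ) = e^x w₁ e^{x−1} w₂ e^{x−1} ⋯ wₙ e^{x−1}`, where the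
neutral symbol `e ∉ Σ` is represented by `none` in the alphabet `Option σ`. -/
def fembed {σ : Type} (x : ℕ) (w : List σ) : List (Option σ) :=
  List.replicate x none ++
    (w.map (fun c => some c :: List.replicate (x - 1) (none : Option σ))).flatten

set_option linter.unusedSectionVars false
namespace Stmt17Aux

open TLFormula TLTerm

variable {σ : Type} [DecidableEq σ]

/-- count of `p` on `range n` -/
def cntL (p : ℕ → Bool) (n : ℕ) : ℕ := ((List.range n).filter p).length

lemma cntL_succ (p : ℕ → Bool) (n : ℕ) :
    cntL p (n + 1) = cntL p n + (if p n then 1 else 0) := by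
  unfold cntL
  rw [List.range_succ, List.filter_append]
  simp [List.filter]
  cases h : p n <;> simp [h]

lemma cntL_congr {p q : ℕ → Bool} {n : ℕ} (h : ∀ j < n, p j = q j) :
    cntL p n = cntL q n := by
  induction n with
  | zero => rfl
  | succ n ih =>
    rw [cntL_succ, cntL_succ, ih (fun j hj => h j (by omega)), h n (by omega)]

lemma cntL_add (p : ℕ → Bool) (a b : ℕ) :
    cntL p (a + b) = cntL p a + cntL (fun j => p (a + j)) b := by
  induction b with
  | zero => simp [cntL]
  | succ b ih => rw [← Nat.add_assoc, cntL_succ, cntL_succ, ih]; ring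

lemma cntL_shift (p : ℕ → Bool) (n : ℕ) :
    cntL (fun j => decide (0 < j) && p (j - 1)) (n + 1) = cntL p n := by
  induction n with
  | zero => simp [cntL, List.range_succ]
  | succ n ih => rw [cntL_succ, ih, cntL_succ]; simp

lemma val_countL_eq (φ : TLFormula σ) (w : List σ) (i : ℕ) :
    TLTerm.val (.countL φ) w i = cntL (fun j => φ.sat w j) (i + 1) := rfl

@[simp] lemma depth_one : (TLTerm.one : TLTerm σ).depth = 0 := rfl

/-- Constant false formula. -/
def fFalse : TLFormula σ := .lt .one .one
/-- Constant true formula. -/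
def fTrue : TLFormula σ := .not fFalse
def constF (b : Bool) : TLFormula σ := if b then fTrue else fFalse

@[simp] lemma sat_fFalse (w : List σ) (i : ℕ) : (fFalse : TLFormula σ).sat w i = false := by
  simp [fFalse, TLFormula.sat, TLTerm.val]
@[simp] lemma sat_fTrue (w : List σ) (i : ℕ) : (fTrue : TLFormula σ).sat w i = true := by
  simp [fTrue, TLFormula.sat]
@[simp] lemma sat_constF (b : Bool) (w : List σ) (i : ℕ) :
    (constF b : TLFormula σ).sat w i = b := by cases b <;> simp [constF]
@[simp] lemma depth_fFalse : (fFalse : TLFormula σ).depth = 0 := rfl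
@[simp] lemma depth_fTrue : (fTrue : TLFormula σ).depth = 0 := rfl
@[simp] lemma depth_constF (b : Bool) : (constF b : TLFormula σ).depth = 0 := by
  cases b <;> rfl

/-- Disjunction of two formulas. -/
def orF (a b : TLFormula σ) : TLFormula σ := .not (.and (.not a) (.not b))
@[simp] lemma sat_orF (a b : TLFormula σ) (w : List σ) (i : ℕ) :
    (orF a b).sat w i = (a.sat w i || b.sat w i) := by
  simp [orF, TLFormula.sat]
@[simp] lemma depth_orF (a b : TLFormula σ) :
    (orF a b).depth = max a.depth b.depth := by simp [orF, TLFormula.depth]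

/-- Big disjunction. -/
def bigOr (L : List (TLFormula σ)) : TLFormula σ := L.foldr orF fFalse
lemma sat_bigOr (L : List (TLFormula σ)) (w : List σ) (i : ℕ) :
    (bigOr L).sat w i = L.any (fun φ => φ.sat w i) := by
  induction L with
  | nil => simp [bigOr]
  | cons a l ih => simp [bigOr, List.foldr] at ih ⊢; rw [ih]
lemma depth_bigOr {L : List (TLFormula σ)} {m : ℕ} (h : ∀ φ ∈ L, TLFormula.depth φ ≤ m) :
    (bigOr L).depth ≤ m := by
  induction L with
  | nil => simp [bigOr, TLFormula.depth]
  | cons a l ih =>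
    simp only [bigOr, List.foldr] at ih ⊢
    rw [show ((orF a (l.foldr orF fFalse)).depth) = _ from depth_orF ..]
    exact max_le (h a (by simp)) (ih (fun φ hφ => h φ (by simp [hφ])))

/-- add `c` ones to a term -/
def addConst (t : TLTerm σ) : ℕ → TLTerm σ
  | 0 => t
  | n + 1 => .add (addConst t n) .one
@[simp] lemma val_addConst (t : TLTerm σ) (c : ℕ) (w : List σ) (i : ℕ) :
    (addConst t c).val w i = t.val w i + c := by
  induction c with
  | zero => rfl
  | succ n ih => simp [addConst, TLTerm.val, ih]; ring
@[simp] lemma depth_addConst (t : TLTerm σ) (c : ℕ) :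
    (addConst t c).depth = t.depth := by
  induction c with
  | zero => rfl
  | succ n ih => simp [addConst, TLTerm.depth, ih]

/-- All boolean vectors of length n. -/
def boolLists : ℕ → List (List Bool)
  | 0 => [[]]
  | n + 1 => (boolLists n).flatMap (fun v => [true :: v, false :: v])

lemma mem_boolLists (v : List Bool) : v ∈ boolLists v.length := by
  induction v with
  | nil => simp [boolLists]
  | cons b l ih =>
    simp only [List.length_cons, boolLists, List.mem_flatMap]
    exact ⟨l, ih, by cases b <;> simp⟩

/-- pattern l v : formula saying each formula in l has truth value given by v -/
def pattern : List (TLFormula σ) → List Bool → TLFormula σ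
  | [], [] => fTrue
  | χ :: l, b :: v => .and (if b then χ else .not χ) (pattern l v)
  | _, _ => fFalse

lemma sat_pattern (l : List (TLFormula σ)) (v : List Bool) (w : List σ) (i : ℕ) :
    (pattern l v).sat w i = true ↔ v = l.map (fun χ => χ.sat w i) := by
  induction l generalizing v with
  | nil => cases v <;> simp [pattern]
  | cons χ l ih =>
    cases v with
    | nil => simp [pattern]
    | cons b v =>
      simp only [pattern, TLFormula.sat, Bool.and_eq_true, List.map, List.cons.injEq]
      rw [ih]
      constructor
      · rintro ⟨h1, h2⟩
        refine ⟨?_, h2⟩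
        cases b <;> simp_all [TLFormula.sat]
      · rintro ⟨h1, h2⟩
        refine ⟨?_, h2⟩
        cases b <;> simp_all [TLFormula.sat]

lemma depth_pattern {l : List (TLFormula σ)} {m : ℕ} (h : ∀ φ ∈ l, TLFormula.depth φ ≤ m)
    (v : List Bool) : (pattern l v).depth ≤ m := by
  induction l generalizing v with
  | nil => cases v <;> simp [pattern, TLFormula.depth]
  | cons χ l ih =>
    cases v with
    | nil => simp [pattern, TLFormula.depth]
    | cons b v =>
      simp only [pattern, TLFormula.depth]
      refine max_le ?_ (ih (fun φ hφ => h φ (by simp [hφ])) v)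
      cases b <;> simpa [TLFormula.depth] using h χ (by simp)

end Stmt17Aux
namespace Stmt17Aux
section Norm
variable {τ : Type} [DecidableEq τ]

mutual
  def yheightF : YFormula τ → ℕ
    | .sym _ => 0
    | .mod _ _ => 0
    | .yop φ => yheightF φ + 1
    | .lt t₁ t₂ => max (yheightT t₁) (yheightT t₂)
    | .not φ => yheightF φ
    | .and a b => max (yheightF a) (yheightF b)
  def yheightT : YTerm τ → ℕ
    | .countL φ => yheightF φ
    | .add a b => max (yheightT a) (yheightT b)
    | .one => 0
end

mutual
  def shiftY : YFormula τ → YFormula τ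
    | .sym a => .yop (.sym a)
    | .mod m r => .yop (.mod m r)
    | .yop φ => .yop (.yop φ)
    | .lt t₁ t₂ => .and (.yop (.mod 1 0)) (.lt (shiftT t₁) (shiftT t₂))
    | .not φ => .and (.yop (.mod 1 0)) (.not (shiftY φ))
    | .and a b => .and (shiftY a) (shiftY b)
  def shiftT : YTerm τ → YTerm τ
    | .countL φ => .countL (shiftY φ)
    | .add a b => .add (shiftT a) (shiftT b)
    | .one => .one
end

mutual
  theorem shiftY_sat (φ : YFormula τ) (w : List τ) (i : ℕ) :
      (shiftY φ).sat w i = (decide (0 < i) && φ.sat w (i - 1)) := by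
    cases φ with
    | sym a => simp [shiftY, YFormula.sat]
    | mod m r => simp [shiftY, YFormula.sat]
    | yop ψ => simp [shiftY, YFormula.sat]
    | lt t₁ t₂ =>
      by_cases hi : 0 < i
      · simp only [shiftY, YFormula.sat, shiftT_val t₁ w i hi, shiftT_val t₂ w i hi]
        simp [hi, Nat.mod_one]
      · simp only [shiftY, YFormula.sat]
        simp [hi]
    | not ψ =>
      simp only [shiftY, YFormula.sat, shiftY_sat ψ w i]
      by_cases hi : 0 < i <;> simp [hi, Nat.mod_one]
    | and a b =>
      simp only [shiftY, YFormula.sat, shiftY_sat a w i, shiftY_sat b w i]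
      by_cases hi : 0 < i <;> simp [hi]
  theorem shiftT_val (t : YTerm τ) (w : List τ) (i : ℕ) (hi : 0 < i) :
      (shiftT t).val w i = t.val w (i - 1) := by
    cases t with
    | countL φ =>
      show cntL (fun j => (shiftY φ).sat w j) (i + 1) = cntL (fun j => φ.sat w j) ((i-1) + 1)
      have h1 : ∀ j < i + 1, (shiftY φ).sat w j
          = (fun j => decide (0 < j) && φ.sat w (j - 1)) j :=
        fun j _ => shiftY_sat φ w j
      rw [cntL_congr h1]
      have := cntL_shift (fun j => φ.sat w j) i
      rw [this]
      congr 1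
      omega
    | add a b =>
      simp [shiftT, YTerm.val, shiftT_val a w i hi, shiftT_val b w i hi]
    | one => rfl
end

theorem shiftY_isYAtom {α : YFormula τ} (h : α.isYAtom) : (shiftY α).isYAtom := by
  cases α <;> simp_all [shiftY, YFormula.isYAtom]

mutual
  theorem shiftY_ynf (φ : YFormula τ) (h : φ.inYNF) : (shiftY φ).inYNF := by
    cases φ with
    | sym a => trivial
    | mod m r => trivial
    | yop ψ => exact h
    | lt t₁ t₂ => exact ⟨trivial, shiftT_ynf t₁ h.1, shiftT_ynf t₂ h.2⟩
    | not ψ => exact ⟨trivial, shiftY_ynf ψ h⟩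
    | and a b => exact ⟨shiftY_ynf a h.1, shiftY_ynf b h.2⟩
  theorem shiftT_ynf (t : YTerm τ) (h : t.inYNF) : (shiftT t).inYNF := by
    cases t with
    | countL φ => exact shiftY_ynf φ h
    | add a b => exact ⟨shiftT_ynf a h.1, shiftT_ynf b h.2⟩
    | one => trivial
end

mutual
  theorem shiftY_depth (φ : YFormula τ) : (shiftY φ).depth = φ.depth := by
    cases φ with
    | sym a => rfl
    | mod m r => rfl
    | yop ψ => rfl
    | lt t₁ t₂ =>
      show max 0 (max (shiftT t₁).depth (shiftT t₂).depth) = _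
      rw [shiftT_depth t₁, shiftT_depth t₂]
      simp [YFormula.depth]
    | not ψ =>
      show max 0 (shiftY ψ).depth = _
      rw [shiftY_depth ψ]; simp [YFormula.depth]
    | and a b =>
      show max (shiftY a).depth (shiftY b).depth = _
      rw [shiftY_depth a, shiftY_depth b]; rfl
  theorem shiftT_depth (t : YTerm τ) : (shiftT t).depth = t.depth := by
    cases t with
    | countL φ => show (shiftY φ).depth + 1 = _; rw [shiftY_depth φ]; rfl
    | add a b =>
      show max (shiftT a).depth (shiftT b).depth = _
      rw [shiftT_depth a, shiftT_depth b]; rfl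
    | one => rfl
end

mutual
  def ynfF : YFormula τ → YFormula τ
    | .sym a => .sym a
    | .mod m r => .mod m r
    | .yop φ => shiftY (ynfF φ)
    | .lt t₁ t₂ => .lt (ynfT t₁) (ynfT t₂)
    | .not φ => .not (ynfF φ)
    | .and a b => .and (ynfF a) (ynfF b)
  def ynfT : YTerm τ → YTerm τ
    | .countL φ => .countL (ynfF φ)
    | .add a b => .add (ynfT a) (ynfT b)
    | .one => .one
end

mutual
  theorem ynfF_sat (φ : YFormula τ) (w : List τ) (i : ℕ) :
      (ynfF φ).sat w i = φ.sat w i := by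
    cases φ with
    | sym a => rfl
    | mod m r => rfl
    | yop ψ =>
      show (shiftY (ynfF ψ)).sat w i = _
      rw [shiftY_sat, ynfF_sat ψ w (i-1)]; rfl
    | lt t₁ t₂ =>
      show decide _ = decide _
      rw [ynfT_val t₁ w i, ynfT_val t₂ w i]
    | not ψ => show (!(ynfF ψ).sat w i) = _; rw [ynfF_sat ψ w i]; rfl
    | and a b =>
      show ((ynfF a).sat w i && (ynfF b).sat w i) = _
      rw [ynfF_sat a w i, ynfF_sat b w i]; rfl
  theorem ynfT_val (t : YTerm τ) (w : List τ) (i : ℕ) :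
      (ynfT t).val w i = t.val w i := by
    cases t with
    | countL φ =>
      show cntL (fun j => (ynfF φ).sat w j) (i+1) = cntL (fun j => φ.sat w j) (i+1)
      exact cntL_congr (fun j _ => ynfF_sat φ w j)
    | add a b => show _ + _ = _ + _; rw [ynfT_val a w i, ynfT_val b w i]
    | one => rfl
end

mutual
  theorem ynfF_ynf (φ : YFormula τ) : (ynfF φ).inYNF := by
    cases φ with
    | sym a => trivial
    | mod m r => trivial
    | yop ψ => exact shiftY_ynf _ (ynfF_ynf ψ)
    | lt t₁ t₂ => exact ⟨ynfT_ynf t₁, ynfT_ynf t₂⟩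
    | not ψ => exact ynfF_ynf ψ
    | and a b => exact ⟨ynfF_ynf a, ynfF_ynf b⟩
  theorem ynfT_ynf (t : YTerm τ) : (ynfT t).inYNF := by
    cases t with
    | countL φ => exact ynfF_ynf φ
    | add a b => exact ⟨ynfT_ynf a, ynfT_ynf b⟩
    | one => trivial
end

mutual
  theorem ynfF_depth (φ : YFormula τ) : (ynfF φ).depth = φ.depth := by
    cases φ with
    | sym a => rfl
    | mod m r => rfl
    | yop ψ => show (shiftY (ynfF ψ)).depth = _; rw [shiftY_depth, ynfF_depth ψ]; rfl
    | lt t₁ t₂ =>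
      show max (ynfT t₁).depth (ynfT t₂).depth = _
      rw [ynfT_depth t₁, ynfT_depth t₂]; rfl
    | not ψ => show (ynfF ψ).depth = _; rw [ynfF_depth ψ]; rfl
    | and a b =>
      show max (ynfF a).depth (ynfF b).depth = _
      rw [ynfF_depth a, ynfF_depth b]; rfl
  theorem ynfT_depth (t : YTerm τ) : (ynfT t).depth = t.depth := by
    cases t with
    | countL φ => show (ynfF φ).depth + 1 = _; rw [ynfF_depth φ]; rfl
    | add a b =>
      show max (ynfT a).depth (ynfT b).depth = _
      rw [ynfT_depth a, ynfT_depth b]; rfl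
    | one => rfl
end

end Norm
end Stmt17Aux
namespace Stmt17Aux
section Cond
variable {τ : Type} [DecidableEq τ]

mutual
  def condF (x B : ℕ) : YFormula τ → Prop
    | .sym _ => True
    | .mod m r => if m = 0 then r + B < x else m ∣ x
    | .yop φ => condF x B φ
    | .lt t₁ t₂ => condT x B t₁ ∧ condT x B t₂
    | .not φ => condF x B φ
    | .and a b => condF x B a ∧ condF x B b
  def condT (x B : ℕ) : YTerm τ → Prop
    | .countL φ => condF x B φ
    | .add a b => condT x B a ∧ condT x B b
    | .one => True
end

mutual
  def modMF : YFormula τ → ℕ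
    | .sym _ => 1
    | .mod m _ => max m 1
    | .yop φ => modMF φ
    | .lt t₁ t₂ => modMT t₁ * modMT t₂
    | .not φ => modMF φ
    | .and a b => modMF a * modMF b
  def modMT : YTerm τ → ℕ
    | .countL φ => modMF φ
    | .add a b => modMT a * modMT b
    | .one => 1
end

mutual
  def rmaxF : YFormula τ → ℕ
    | .sym _ => 0
    | .mod _ r => r
    | .yop φ => rmaxF φ
    | .lt t₁ t₂ => max (rmaxT t₁) (rmaxT t₂)
    | .not φ => rmaxF φ
    | .and a b => max (rmaxF a) (rmaxF b)
  def rmaxT : YTerm τ → ℕ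
    | .countL φ => rmaxF φ
    | .add a b => max (rmaxT a) (rmaxT b)
    | .one => 0
end

mutual
  theorem modMF_pos (φ : YFormula τ) : 1 ≤ modMF φ := by
    cases φ with
    | sym a => exact le_refl 1
    | mod m r => simp [modMF]
    | yop ψ => exact modMF_pos ψ
    | lt t₁ t₂ => exact Nat.one_le_iff_ne_zero.2 (Nat.mul_ne_zero
        (Nat.one_le_iff_ne_zero.1 (modMT_pos t₁)) (Nat.one_le_iff_ne_zero.1 (modMT_pos t₂)))
    | not ψ => exact modMF_pos ψ
    | and a b => exact Nat.one_le_iff_ne_zero.2 (Nat.mul_ne_zero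
        (Nat.one_le_iff_ne_zero.1 (modMF_pos a)) (Nat.one_le_iff_ne_zero.1 (modMF_pos b)))
  theorem modMT_pos (t : YTerm τ) : 1 ≤ modMT t := by
    cases t with
    | countL φ => exact modMF_pos φ
    | add a b => exact Nat.one_le_iff_ne_zero.2 (Nat.mul_ne_zero
        (Nat.one_le_iff_ne_zero.1 (modMT_pos a)) (Nat.one_le_iff_ne_zero.1 (modMT_pos b)))
    | one => exact le_refl 1
end

mutual
  theorem condF_of (φ : YFormula τ) (x B : ℕ) (hm : modMF φ ∣ x) (hr : rmaxF φ + B < x) :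
      condF x B φ := by
    cases φ with
    | sym a => trivial
    | mod m r =>
      show condF x B (.mod m r)
      unfold condF
      by_cases hm0 : m = 0
      · simpa [hm0, rmaxF] using hr
      · have : max m 1 = m := by omega
        simp only [hm0, if_false]
        simpa [modMF, this] using hm
    | yop ψ => exact condF_of ψ x B hm hr
    | lt t₁ t₂ =>
      exact ⟨condT_of t₁ x B (dvd_trans (Dvd.intro _ rfl) hm)
              (by simp [rmaxF] at hr; omega),
             condT_of t₂ x B (dvd_trans (Dvd.intro_left _ rfl) hm)
              (by simp [rmaxF] at hr; omega)⟩
    | not ψ => exact condF_of ψ x B hm hr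
    | and a b =>
      exact ⟨condF_of a x B (dvd_trans (Dvd.intro _ rfl) hm)
              (by simp [rmaxF] at hr; omega),
             condF_of b x B (dvd_trans (Dvd.intro_left _ rfl) hm)
              (by simp [rmaxF] at hr; omega)⟩
  theorem condT_of (t : YTerm τ) (x B : ℕ) (hm : modMT t ∣ x) (hr : rmaxT t + B < x) :
      condT x B t := by
    cases t with
    | countL φ => exact condF_of φ x B hm hr
    | add a b =>
      exact ⟨condT_of a x B (dvd_trans (Dvd.intro _ rfl) hm)
              (by simp [rmaxT] at hr; omega),
             condT_of b x B (dvd_trans (Dvd.intro_left _ rfl) hm)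
              (by simp [rmaxT] at hr; omega)⟩
    | one => trivial
end

def ycount : YFormula τ → ℕ
  | .yop φ => ycount φ + 1
  | _ => 0

def acore : YFormula τ → YFormula τ
  | .yop φ => acore φ
  | φ => φ

theorem atomEval (α : YFormula τ) (h : α.isYAtom) (w : List τ) (i : ℕ) :
    α.sat w i = (decide (ycount α ≤ i) && (acore α).sat w (i - ycount α)) := by
  cases α with
  | yop ψ =>
    show (decide (0 < i) && ψ.sat w (i-1)) = _
    rw [atomEval ψ h w (i-1)]
    have h1 : ycount (YFormula.yop ψ) = ycount ψ + 1 := rfl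
    have h2 : acore (YFormula.yop ψ) = acore ψ := rfl
    rw [h1, h2]
    by_cases hi : 0 < i
    · by_cases hc : ycount ψ ≤ i - 1
      · have : ycount ψ + 1 ≤ i := by omega
        have he : i - 1 - ycount ψ = i - (ycount ψ + 1) := by omega
        simp [hi, hc, this, he]
      · have : ¬ (ycount ψ + 1 ≤ i) := by omega
        simp [hi, hc, this]
    · have : ¬ (ycount ψ + 1 ≤ i) := by omega
      simp [hi, this]
  | sym a => simp [ycount, acore]
  | mod m r => simp [ycount, acore]
  | lt t₁ t₂ => exact absurd h (by simp [YFormula.isYAtom])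
  | not ψ => exact absurd h (by simp [YFormula.isYAtom])
  | and a b => exact absurd h (by simp [YFormula.isYAtom])

theorem acore_shape (α : YFormula τ) (h : α.isYAtom) :
    (∃ a, acore α = .sym a) ∨ (∃ m r, acore α = .mod m r) := by
  cases α with
  | yop ψ => exact acore_shape ψ h
  | sym a => exact Or.inl ⟨a, rfl⟩
  | mod m r => exact Or.inr ⟨m, r, rfl⟩
  | lt t₁ t₂ => exact absurd h (by simp [YFormula.isYAtom])
  | not ψ => exact absurd h (by simp [YFormula.isYAtom])
  | and a b => exact absurd h (by simp [YFormula.isYAtom])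

theorem ycount_le_yheight (α : YFormula τ) : ycount α ≤ yheightF α := by
  cases α with
  | yop ψ => exact Nat.succ_le_succ (ycount_le_yheight ψ)
  | sym a => exact Nat.zero_le _
  | mod m r => exact Nat.zero_le _
  | lt t₁ t₂ => exact Nat.zero_le _
  | not ψ => exact Nat.zero_le _
  | and a b => exact Nat.zero_le _

theorem condF_acore (α : YFormula τ) (x B : ℕ) (h : condF x B α) : condF x B (acore α) := by
  cases α with
  | yop ψ => exact condF_acore ψ x B h
  | sym a => exact h
  | mod m r => exact h
  | lt t₁ t₂ => exact h
  | not ψ => exact h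
  | and a b => exact h

end Cond
end Stmt17Aux
namespace Stmt17Aux
section Fembed
variable {σ : Type} [DecidableEq σ]

theorem fembed_length (x : ℕ) (hx : 1 ≤ x) (w : List σ) :
    (fembed x w).length = x + w.length * x := by
  induction w with
  | nil => simp [fembed]
  | cons a l ih =>
    simp only [fembed, List.map_cons, List.flatten_cons, List.length_append] at ih ⊢
    simp only [List.length_cons, List.length_replicate, List.length_map] at ih ⊢
    have h1 : (l.length + 1) * x = l.length * x + x := Nat.succ_mul _ _
    omega

theorem flat_get (x : ℕ) (hx : 1 ≤ x) (w : List σ) (q s : ℕ) (hs : s < x)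
    (hq : q < w.length) :
    ((w.map (fun c => some c :: List.replicate (x - 1) (none : Option σ))).flatten)[q * x + s]?
      = some (if s = 0 then some (w[q]'hq) else none) := by
  induction w generalizing q with
  | nil => simp at hq
  | cons a l ih =>
    simp only [List.map_cons, List.flatten_cons]
    have hlen : (some a :: List.replicate (x - 1) (none : Option σ)).length = x := by
      simp; omega
    cases q with
    | zero =>
      simp only [Nat.zero_mul, Nat.zero_add]
      rw [List.getElem?_append_left (by omega)]
      cases s with
      | zero => simp
      | succ s' =>
        simp only [List.getElem?_cons_succ]
        rw [List.getElem?_replicate]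
        simp only [if_pos (by omega : s' < x - 1)]
        simp
    | succ q' =>
      have harith : (q' + 1) * x + s = x + (q' * x + s) := by ring
      rw [harith, List.getElem?_append_right (by omega)]
      have hq' : q' < l.length := by simp at hq; omega
      have h2 : x + (q' * x + s) - (some a :: List.replicate (x - 1) (none : Option σ)).length
          = q' * x + s := by omega
      rw [h2, ih q' hq']
      simp

theorem fembed_get_zero (x : ℕ) (w : List σ) (j : ℕ) (hj : j < x) :
    (fembed x w)[j]? = some none := by
  unfold fembed
  rw [List.getElem?_append_left (by simpa using hj)]
  rw [List.getElem?_replicate, if_pos hj]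

theorem fembed_get_block (x : ℕ) (hx : 1 ≤ x) (w : List σ) (q s : ℕ) (hs : s < x)
    (hq1 : 1 ≤ q) (hq2 : q ≤ w.length) :
    (fembed x w)[q * x + s]? = some (if s = 0 then some (w[q-1]'(by omega)) else none) := by
  obtain ⟨q', rfl⟩ : ∃ q', q = q' + 1 := ⟨q - 1, by omega⟩
  unfold fembed
  have harith : (q' + 1) * x + s = x + (q' * x + s) := by ring
  rw [harith, List.getElem?_append_right
    (by rw [List.length_replicate]; exact Nat.le_add_right _ _)]
  have h2 : x + (q' * x + s) - (List.replicate x (none : Option σ)).length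
      = q' * x + s := by simp
  rw [h2, flat_get x hx w q' s hs (by omega)]
  simp

mutual
  theorem satPrefixF (φ : YFormula (Option σ)) (w w' : List (Option σ)) (i : ℕ)
      (h : ∀ j ≤ i, w[j]? = w'[j]?) : φ.sat w i = φ.sat w' i := by
    cases φ with
    | sym a => show decide _ = decide _; rw [h i (le_refl i)]
    | mod m r => rfl
    | yop ψ =>
      show (decide (0 < i) && ψ.sat w (i-1)) = (decide (0 < i) && ψ.sat w' (i-1))
      rw [satPrefixF ψ w w' (i-1) (fun j hj => h j (by omega))]
    | lt t₁ t₂ =>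
      show decide _ = decide _
      rw [satPrefixT t₁ w w' i h, satPrefixT t₂ w w' i h]
    | not ψ =>
      show (!YFormula.sat ψ w i) = (!YFormula.sat ψ w' i)
      rw [satPrefixF ψ w w' i h]
    | and a b =>
      show (_ && _) = (_ && _)
      rw [satPrefixF a w w' i h, satPrefixF b w w' i h]
  theorem satPrefixT (t : YTerm (Option σ)) (w w' : List (Option σ)) (i : ℕ)
      (h : ∀ j ≤ i, w[j]? = w'[j]?) : t.val w i = t.val w' i := by
    cases t with
    | countL φ =>
      show cntL (fun j => φ.sat w j) (i+1) = cntL (fun j => φ.sat w' j) (i+1)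
      exact cntL_congr (fun j hj => satPrefixF φ w w' j (fun j' hj' => h j' (by omega)))
    | add a b =>
      show _ + _ = _ + _
      rw [satPrefixT a w w' i h, satPrefixT b w w' i h]
    | one => rfl
end

/-- truth in block 0 does not depend on `w` -/
theorem block0_const (x : ℕ) (ψ : YFormula (Option σ)) (w : List σ) (s : ℕ) (hs : s < x) :
    ψ.sat (fembed x w) s = ψ.sat (List.replicate x none) s := by
  apply satPrefixF
  intro j hj
  rw [fembed_get_zero x w j (by omega), List.getElem?_replicate, if_pos (by omega)]

end Fembed
end Stmt17Aux
namespace Stmt17Aux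

lemma cntL_eq_sum (p : ℕ → Bool) (n : ℕ) :
    cntL p n = ∑ j ∈ Finset.range n, (if p j then 1 else 0) := by
  induction n with
  | zero => rfl
  | succ n ih => rw [cntL_succ, Finset.sum_range_succ, ih]

lemma listsum_range (f : ℕ → ℕ) (n : ℕ) :
    ((List.range n).map f).sum = ∑ j ∈ Finset.range n, f j := by
  induction n with
  | zero => rfl
  | succ n ih => rw [List.range_succ, Finset.sum_range_succ, List.map_append, List.sum_append, ih]; simp

lemma div_shift {x : ℕ} (h0 : 0 < x) (Q u : ℕ) : (x * Q + u) / x = Q + u / x :=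
  Nat.mul_add_div h0 _ _

lemma esimp {x : ℕ} (h0 : 0 < x) (m s'' : ℕ) (hs : s'' < x) :
    (m + x - 1 - s'') / x = m / x + (if s'' < m % x then 1 else 0) := by
  obtain ⟨Q, r, rfl, hr⟩ : ∃ Q r, m = x * Q + r ∧ r < x :=
    ⟨m / x, m % x, (Nat.div_add_mod m x).symm, Nat.mod_lt _ h0⟩
  have hdiv : (x * Q + r) / x = Q := by
    rw [div_shift h0, Nat.div_eq_of_lt hr]; omega
  have hmod : (x * Q + r) % x = r := by
    rw [Nat.mul_add_mod, Nat.mod_eq_of_lt hr]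
  rw [hdiv, hmod]
  have h1 : x * Q + r + x - 1 - s'' = x * Q + (r + x - 1 - s'') := by omega
  rw [h1, div_shift h0]
  congr 1
  by_cases hc : s'' < r
  · have hd := div_shift h0 1 (r - 1 - s'')
    rw [Nat.mul_one] at hd
    have h2 : r + x - 1 - s'' = x + (r - 1 - s'') := by omega
    rw [h2, hd, Nat.div_eq_of_lt (by omega)]
    simp [hc]
  · rw [Nat.div_eq_of_lt (by omega)]
    simp [hc]

lemma esucc {x : ℕ} (h0 : 0 < x) (m s'' : ℕ) (hs : s'' < x) :
    (m + 1 + x - 1 - s'') / x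
      = (m + x - 1 - s'') / x + (if s'' = m % x then 1 else 0) := by
  obtain ⟨Q, r, rfl, hr⟩ : ∃ Q r, m = x * Q + r ∧ r < x :=
    ⟨m / x, m % x, (Nat.div_add_mod m x).symm, Nat.mod_lt _ h0⟩
  have hmod : (x * Q + r) % x = r := by
    rw [Nat.mul_add_mod, Nat.mod_eq_of_lt hr]
  have hdiv : (x * Q + r) / x = Q := by
    rw [div_shift h0, Nat.div_eq_of_lt hr]; omega
  rw [hmod]
  conv_rhs => rw [esimp h0 (x * Q + r) s'' hs]
  rw [hmod, hdiv]
  have h1 : x * Q + r + 1 + x - 1 - s'' = x * Q + (x + r - s'') := by omega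
  rw [h1, div_shift h0]
  by_cases hc : s'' ≤ r
  · have hd := div_shift h0 1 (r - s'')
    rw [Nat.mul_one] at hd
    have h2 : x + r - s'' = x + (r - s'') := by omega
    rw [h2, hd, Nat.div_eq_of_lt (by omega)]
    rcases Nat.lt_or_ge s'' r with h | h
    · simp [h, Nat.ne_of_lt h]
    · have hx2 : s'' = r := by omega
      simp [hx2, h]
  · rw [Nat.div_eq_of_lt (by omega)]
    have h3 : ¬ s'' < r := by omega
    have h4 : s'' ≠ r := by omega
    simp [h3, h4]

lemma e_at_m {x : ℕ} (h0 : 0 < (x:ℕ)) (m s'' : ℕ) (hs : s'' < x) (hrx : s'' = m % x) :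
    (m + x - 1 - s'') / x = m / x := by
  rw [esimp h0 m s'' hs, hrx]; simp

lemma cnt_decomp {x n : ℕ} (hx : 1 ≤ x) (g : ℕ → Bool) (BB : ℕ → ℕ → Bool)
    (hg : ∀ j < n * x, g j = BB (j % x) (j / x)) :
    ∀ m, m ≤ n * x →
      cntL g m = ∑ s'' ∈ Finset.range x, cntL (BB s'') ((m + x - 1 - s'') / x) := by
  intro m
  induction m with
  | zero =>
    intro _
    rw [show cntL g 0 = 0 from rfl]
    rw [Finset.sum_congr rfl (fun s'' hs'' => by
      rw [Nat.div_eq_of_lt (by simp at hs''; omega)])]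
    simp [cntL]
  | succ m ih =>
    intro hm
    have hmx : m < n * x := by omega
    rw [cntL_succ, ih (by omega), hg m hmx]
    have hrx : m % x < x := Nat.mod_lt _ (by omega)
    have key : ∀ s'' ∈ Finset.range x,
        cntL (BB s'') ((m + 1 + x - 1 - s'') / x)
          = cntL (BB s'') ((m + x - 1 - s'') / x)
            + (if s'' = m % x then (if BB (m % x) (m / x) then 1 else 0) else 0) := by
      intro s'' hs''
      simp only [Finset.mem_range] at hs''
      rw [esucc (by omega) m s'' hs'']
      by_cases hc : s'' = m % x
      · rw [if_pos hc, if_pos hc, e_at_m (by omega) m s'' hs'' hc, hc, cntL_succ]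
      · rw [if_neg hc, if_neg hc, Nat.add_zero, Nat.add_zero]
    rw [Finset.sum_congr rfl key, Finset.sum_add_distrib]
    congr 1
    rw [Finset.sum_ite_eq' (Finset.range x) (m % x)
      (fun _ => if BB (m % x) (m / x) then 1 else 0)]
    simp [hrx]

lemma e_block {x : ℕ} (hx : 1 ≤ x) (q s s'' : ℕ) (hq : 1 ≤ q) (hs : s < x) (hs'' : s'' < x) :
    ((q - 1) * x + s + 1 + x - 1 - s'') / x = if s'' ≤ s then q else q - 1 := by
  by_cases hsx : s + 1 < x
  · have hmod : ((q-1) * x + (s + 1)) % x = s + 1 := by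
      rw [Nat.mul_comm, Nat.mul_add_mod, Nat.mod_eq_of_lt hsx]
    have hdiv : ((q-1) * x + (s + 1)) / x = q - 1 := by
      rw [Nat.mul_comm, div_shift (by omega), Nat.div_eq_of_lt hsx]
      omega
    have h1 : (q-1) * x + s + 1 = (q-1) * x + (s + 1) := by omega
    rw [h1, esimp (by omega) _ s'' hs'', hmod, hdiv]
    by_cases hc : s'' ≤ s
    · rw [if_pos (by omega : s'' < s + 1), if_pos hc]; omega
    · rw [if_neg (by omega : ¬ s'' < s + 1), if_neg hc]; omega
  · have hxe : s + 1 = x := by omega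
    have h2 : x * q = x * (q - 1) + x := by
      conv_lhs => rw [show q = (q - 1) + 1 by omega]
      rw [Nat.mul_succ]
    have h1 : (q-1) * x + s + 1 = x * q := by
      rw [h2, Nat.mul_comm]; omega
    rw [h1]
    have hmod : (x * q) % x = 0 := by simp
    have hdiv : (x * q) / x = q := by rw [Nat.mul_div_cancel_left _ (by omega : 0 < x)]
    rw [esimp (by omega) _ s'' hs'', hmod, hdiv]
    have hc : s'' ≤ s := by omega
    simp [hc]

/-- value of foldr add one -/
lemma val_foldr {σ : Type} [DecidableEq σ] (l : List (TLTerm σ)) (w : List σ) (i : ℕ) :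
    (l.foldr TLTerm.add TLTerm.one).val w i = (l.map (fun t => t.val w i)).sum + 1 := by
  induction l with
  | nil => rfl
  | cons t l ih => simp only [List.foldr, List.map, List.sum_cons, TLTerm.val, ih]; ring

lemma depth_foldr {σ : Type} {l : List (TLTerm σ)} {m : ℕ}
    (h : ∀ t ∈ l, TLTerm.depth t ≤ m) :
    (l.foldr TLTerm.add TLTerm.one).depth ≤ m := by
  induction l with
  | nil => simp
  | cons t l ih =>
    show max _ _ ≤ m
    exact max_le (h t (by simp)) (ih (fun t' ht' => h t' (by simp [ht'])))

end Stmt17Aux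
namespace Stmt17Aux
section Atom
variable {σ : Type} [DecidableEq σ]

theorem fembed_get_none (x : ℕ) (hx : 1 ≤ x) (w : List σ) (Q s' : ℕ)
    (h1 : 1 ≤ s') (h2 : s' < x) (hQ : Q ≤ w.length) :
    (fembed x w)[Q * x + s']? = some none := by
  rcases Nat.eq_zero_or_pos Q with hQ0 | hQ1
  · subst hQ0
    rw [Nat.zero_mul, Nat.zero_add]
    exact fembed_get_zero x w s' h2
  · rw [fembed_get_block x hx w Q s' h2 hQ1 hQ, if_neg (by omega)]

theorem atomCase (x B : ℕ) (hx : 1 ≤ x) (hB : B < x) (α : YFormula (Option σ))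
    (hA : α.isYAtom) (hc : condF x B α) (hy : yheightF α ≤ B) (s : ℕ) (hs : s < x) :
    ∃ T : TLFormula σ, T.depth = 0 ∧
      ∀ (w : List σ) (q : ℕ), 1 ≤ q → q ≤ w.length →
        α.sat (fembed x w) (q * x + s) = T.sat w (q - 1) := by
  set c := ycount α with hcdef
  have hcB : c ≤ B := le_trans (ycount_le_yheight α) hy
  have hcx : c < x := by omega
  have hcore := condF_acore α x B hc
  have hkey : ∀ (w : List σ) (q : ℕ), 1 ≤ q → q ≤ w.length →
      α.sat (fembed x w) (q * x + s)
        = (acore α).sat (fembed x w) (q * x + s - c) := by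
    intro w q hq1 hq2
    rw [atomEval α hA]
    have : c ≤ q * x + s := by
      calc c ≤ x := by omega
      _ ≤ q * x := Nat.le_mul_of_pos_left x hq1
      _ ≤ q * x + s := Nat.le_add_right _ _
    simp [← hcdef, this]
  rcases acore_shape α hA with ⟨a, ha⟩ | ⟨m, r, ha⟩
  · -- acore is a symbol test
    cases a with
    | some a' =>
      refine ⟨if s = c then .sym a' else fFalse, by split <;> rfl, ?_⟩
      intro w q hq1 hq2
      rw [hkey w q hq1 hq2, ha]
      simp only [YFormula.sat]
      by_cases hsc : s = c
      · have harith : q * x + s - c = q * x + 0 := by omega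
        rw [harith, fembed_get_block x hx w q 0 (by omega) hq1 hq2, if_pos hsc]
        simp only [if_pos rfl]
        have hw : w[q-1]? = some (w[q-1]'(by omega)) := List.getElem?_eq_getElem _
        show decide _ = decide _
        rw [hw]
        simp
      · rw [if_neg hsc, sat_fFalse]
        by_cases hcs : c ≤ s
        · have harith : q * x + s - c = q * x + (s - c) := by omega
          rw [harith, fembed_get_block x hx w q (s - c) (by omega) hq1 hq2,
            if_neg (by omega)]
          simp
        · have harith : q * x + s - c = (q - 1) * x + (x + s - c) := by
            have hqq : q * x = (q - 1) * x + x := by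
              conv_lhs => rw [show q = (q - 1) + 1 by omega]
              rw [Nat.succ_mul]
            omega
          rw [harith, fembed_get_none x hx w (q-1) (x + s - c) (by omega) (by omega)
            (by omega)]
          simp
    | none =>
      refine ⟨if s = c then fFalse else fTrue, by split <;> rfl, ?_⟩
      intro w q hq1 hq2
      rw [hkey w q hq1 hq2, ha]
      simp only [YFormula.sat]
      by_cases hsc : s = c
      · have harith : q * x + s - c = q * x + 0 := by omega
        rw [harith, fembed_get_block x hx w q 0 (by omega) hq1 hq2, if_pos hsc,
          sat_fFalse]
        simp
      · rw [if_neg hsc, sat_fTrue]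
        by_cases hcs : c ≤ s
        · have harith : q * x + s - c = q * x + (s - c) := by omega
          rw [harith, fembed_get_block x hx w q (s - c) (by omega) hq1 hq2,
            if_neg (by omega)]
          simp
        · have harith : q * x + s - c = (q - 1) * x + (x + s - c) := by
            have hqq : q * x = (q - 1) * x + x := by
              conv_lhs => rw [show q = (q - 1) + 1 by omega]
              rw [Nat.succ_mul]
            omega
          rw [harith, fembed_get_none x hx w (q-1) (x + s - c) (by omega) (by omega)
            (by omega)]
          simp
  · -- acore is a MOD test
    rw [ha] at hcore
    by_cases hm0 : m = 0
    · subst hm0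
      have hrB : r + B < x := by
        have : condF x B (YFormula.mod 0 r) := hcore
        unfold condF at this
        simpa using this
      refine ⟨fFalse, rfl, ?_⟩
      intro w q hq1 hq2
      rw [hkey w q hq1 hq2, ha, sat_fFalse]
      simp only [YFormula.sat]
      show decide _ = false
      have hne : q * x + s - c + 1 ≠ r := by
        have h1 : x ≤ q * x := Nat.le_mul_of_pos_left x hq1
        omega
      simp only [Nat.mod_zero]
      simpa using hne
    · have hdvd : m ∣ x := by
        have : condF x B (YFormula.mod m r) := hcore
        unfold condF at this
        rw [if_neg hm0] at this
        exact this
      refine ⟨constF (decide ((x + s - c + 1) % m = r % m)), by simp, ?_⟩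
      intro w q hq1 hq2
      rw [hkey w q hq1 hq2, ha, sat_constF]
      simp only [YFormula.sat]
      show decide _ = _
      obtain ⟨k, hk⟩ := hdvd
      have hqq : q * x = (q - 1) * x + x := by
        conv_lhs => rw [show q = (q - 1) + 1 by omega]
        rw [Nat.succ_mul]
      have harith : q * x + s - c + 1 = m * ((q-1) * k) + (x + s - c + 1) := by
        have h2 : m * ((q-1) * k) = (q-1) * x := by
          rw [hk]; ring
        omega
      rw [harith, Nat.mul_add_mod]

end Atom
end Stmt17Aux
namespace Stmt17Aux
section Main
variable {σ : Type} [DecidableEq σ]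

lemma bool_ext {a b : Bool} (h : a = true ↔ b = true) : a = b := by
  cases a <;> cases b <;> simp_all

mutual
theorem mainF (x B : ℕ) (hx : 1 ≤ x) (hB : B < x) (ψ : YFormula (Option σ))
    (hNF : ψ.inYNF) (hc : condF x B ψ) (hy : yheightF ψ ≤ B) (s : ℕ) (hs : s < x) :
    ∃ T : TLFormula σ, T.depth ≤ ψ.depth ∧
      ∀ (w : List σ) (q : ℕ), 1 ≤ q → q ≤ w.length →
        ψ.sat (fembed x w) (q * x + s) = T.sat w (q - 1) := by
  cases ψ with
  | sym a =>
    obtain ⟨T, hd, hsat⟩ := atomCase x B hx hB (.sym a) trivial hc hy s hs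
    exact ⟨T, by rw [hd]; exact Nat.zero_le _, hsat⟩
  | mod m r =>
    obtain ⟨T, hd, hsat⟩ := atomCase x B hx hB (.mod m r) trivial hc hy s hs
    exact ⟨T, by rw [hd]; exact Nat.zero_le _, hsat⟩
  | yop φ =>
    obtain ⟨T, hd, hsat⟩ := atomCase x B hx hB (.yop φ) hNF hc hy s hs
    exact ⟨T, by rw [hd]; exact Nat.zero_le _, hsat⟩
  | not φ =>
    obtain ⟨T, hd, hsat⟩ := mainF x B hx hB φ hNF hc hy s hs
    refine ⟨.not T, hd, ?_⟩
    intro w q hq1 hq2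
    show (!φ.sat (fembed x w) (q * x + s)) = (!T.sat w (q - 1))
    rw [hsat w q hq1 hq2]
  | and a b =>
    obtain ⟨T₁, hd₁, hsat₁⟩ := mainF x B hx hB a hNF.1 hc.1 (le_trans (le_max_left _ _) hy) s hs
    obtain ⟨T₂, hd₂, hsat₂⟩ := mainF x B hx hB b hNF.2 hc.2 (le_trans (le_max_right _ _) hy) s hs
    refine ⟨.and T₁ T₂, max_le (le_trans hd₁ (le_max_left _ _)) (le_trans hd₂ (le_max_right _ _)), ?_⟩
    intro w q hq1 hq2
    show (a.sat _ _ && b.sat _ _) = (T₁.sat _ _ && T₂.sat _ _)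
    rw [hsat₁ w q hq1 hq2, hsat₂ w q hq1 hq2]
  | lt t₁ t₂ =>
    obtain ⟨tp₁, corr₁, c₁, d₁, hdp₁, hdc₁, heq₁⟩ :=
      mainT x B hx hB t₁ hNF.1 hc.1 (le_trans (le_max_left _ _) hy) s hs
    obtain ⟨tp₂, corr₂, c₂, d₂, hdp₂, hdc₂, heq₂⟩ :=
      mainT x B hx hB t₂ hNF.2 hc.2 (le_trans (le_max_right _ _) hy) s hs
    refine ⟨bigOr ((boolLists corr₁.length).flatMap (fun v₁ =>
        (boolLists corr₂.length).map (fun v₂ =>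
          TLFormula.and (pattern corr₁ v₁) (.and (pattern corr₂ v₂)
            (.lt (addConst tp₁ (c₁ + d₂ + v₂.countP id))
                 (addConst tp₂ (c₂ + d₁ + v₁.countP id))))))), ?_, ?_⟩
    · apply depth_bigOr
      intro φ' hφ'
      rw [List.mem_flatMap] at hφ'
      obtain ⟨v₁, hv₁, hφ'⟩ := hφ'
      rw [List.mem_map] at hφ'
      obtain ⟨v₂, hv₂, rfl⟩ := hφ'
      show max _ _ ≤ (YFormula.lt t₁ t₂).depth
      have hp₁ : (pattern corr₁ v₁).depth ≤ YTerm.depth t₁ := depth_pattern hdc₁ v₁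
      have hp₂ : (pattern corr₂ v₂).depth ≤ YTerm.depth t₂ := depth_pattern hdc₂ v₂
      show max _ (max _ (max _ _)) ≤ max (YTerm.depth t₁) (YTerm.depth t₂)
      rw [depth_addConst, depth_addConst]
      exact max_le (le_trans hp₁ (le_max_left _ _))
        (max_le (le_trans hp₂ (le_max_right _ _))
          (max_le (le_trans hdp₁ (le_max_left _ _)) (le_trans hdp₂ (le_max_right _ _))))
    · intro w q hq1 hq2
      have he₁ := heq₁ w q hq1 hq2
      have he₂ := heq₂ w q hq1 hq2
      rw [sat_bigOr]
      apply bool_ext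
      show decide _ = true ↔ _
      rw [decide_eq_true_iff, List.any_eq_true]
      set vv₁ := corr₁.map (fun χ => χ.sat w (q - 1)) with hvv₁
      set vv₂ := corr₂.map (fun χ => χ.sat w (q - 1)) with hvv₂
      have hk₁ : vv₁.countP id = (corr₁.filter (fun χ => χ.sat w (q-1))).length := by
        rw [hvv₁, List.countP_map, ← List.countP_eq_length_filter]
        rfl
      have hk₂ : vv₂.countP id = (corr₂.filter (fun χ => χ.sat w (q-1))).length := by
        rw [hvv₂, List.countP_map, ← List.countP_eq_length_filter]
        rfl
      constructor
      · intro hlt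
        refine ⟨_, List.mem_flatMap.mpr ⟨vv₁,
          by rw [hvv₁]; have := mem_boolLists vv₁; rwa [hvv₁, List.length_map] at this,
          List.mem_map.mpr ⟨vv₂,
            by have := mem_boolLists vv₂; rwa [hvv₂, List.length_map] at this, rfl⟩⟩, ?_⟩
        show (_ && (_ && _)) = true
        rw [Bool.and_eq_true, Bool.and_eq_true]
        refine ⟨(sat_pattern _ _ _ _).mpr hvv₁, (sat_pattern _ _ _ _).mpr hvv₂, ?_⟩
        show decide _ = true
        rw [decide_eq_true_iff, val_addConst, val_addConst, hk₁, hk₂]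
        omega
      · rintro ⟨φ', hmem, hsatφ'⟩
        rw [List.mem_flatMap] at hmem
        obtain ⟨v₁, hv₁, hmem⟩ := hmem
        rw [List.mem_map] at hmem
        obtain ⟨v₂, hv₂, rfl⟩ := hmem
        rw [show ∀ a b c : TLFormula σ, (TLFormula.and a (.and b c)).sat w (q-1)
            = (a.sat w (q-1) && (b.sat w (q-1) && c.sat w (q-1))) from fun _ _ _ => rfl] at hsatφ'
        rw [Bool.and_eq_true, Bool.and_eq_true] at hsatφ'
        obtain ⟨hp₁, hp₂, hl⟩ := hsatφ'
        have hv₁' : v₁ = vv₁ := (sat_pattern _ _ _ _).mp hp₁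
        have hv₂' : v₂ = vv₂ := (sat_pattern _ _ _ _).mp hp₂
        subst hv₁' hv₂'
        rw [show ∀ u v : TLTerm σ, (TLFormula.lt u v).sat w (q-1)
            = decide (u.val w (q-1) < v.val w (q-1)) from fun _ _ => rfl] at hl
        rw [decide_eq_true_iff, val_addConst, val_addConst, hk₁, hk₂] at hl
        omega

theorem mainT (x B : ℕ) (hx : 1 ≤ x) (hB : B < x) (t : YTerm (Option σ))
    (hNF : t.inYNF) (hc : condT x B t) (hy : yheightT t ≤ B) (s : ℕ) (hs : s < x) :
    ∃ (tp : TLTerm σ) (corr : List (TLFormula σ)) (c d : ℕ),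
      tp.depth ≤ t.depth ∧ (∀ χ ∈ corr, χ.depth ≤ t.depth) ∧
      ∀ (w : List σ) (q : ℕ), 1 ≤ q → q ≤ w.length →
        t.val (fembed x w) (q * x + s) + (corr.filter (fun χ => χ.sat w (q-1))).length + d
          = tp.val w (q - 1) + c := by
  cases t with
  | one =>
    refine ⟨.one, [], 1, 1, le_refl _, by simp, ?_⟩
    intro w q hq1 hq2
    simp [YTerm.val, TLTerm.val]
  | add a b =>
    obtain ⟨tp₁, corr₁, c₁, d₁, hdp₁, hdc₁, heq₁⟩ :=
      mainT x B hx hB a hNF.1 hc.1 (le_trans (le_max_left _ _) hy) s hs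
    obtain ⟨tp₂, corr₂, c₂, d₂, hdp₂, hdc₂, heq₂⟩ :=
      mainT x B hx hB b hNF.2 hc.2 (le_trans (le_max_right _ _) hy) s hs
    refine ⟨.add tp₁ tp₂, corr₁ ++ corr₂, c₁ + c₂, d₁ + d₂,
      max_le (le_trans hdp₁ (le_max_left _ _)) (le_trans hdp₂ (le_max_right _ _)), ?_, ?_⟩
    · intro χ hχ
      rcases List.mem_append.mp hχ with h | h
      · exact le_trans (hdc₁ χ h) (le_max_left _ _)
      · exact le_trans (hdc₂ χ h) (le_max_right _ _)
    · intro w q hq1 hq2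
      have he₁ := heq₁ w q hq1 hq2
      have he₂ := heq₂ w q hq1 hq2
      show YTerm.val a _ _ + YTerm.val b _ _ + _ + _ = TLTerm.val tp₁ _ _ + TLTerm.val tp₂ _ _ + _
      rw [List.filter_append, List.length_append]
      omega
  | countL φ =>
    have H : ∀ s'' : ℕ, ∃ T : TLFormula σ, T.depth ≤ φ.depth ∧
        ∀ (w : List σ) (q : ℕ), 1 ≤ q → q ≤ w.length → s'' < x →
          φ.sat (fembed x w) (q * x + s'') = T.sat w (q - 1) := by
      intro s''
      by_cases h : s'' < x
      · obtain ⟨T, hd, hsat⟩ := mainF x B hx hB φ hNF hc hy s'' h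
        exact ⟨T, hd, fun w q h1 h2 _ => hsat w q h1 h2⟩
      · exact ⟨fFalse, by simp, fun _ _ _ _ h' => absurd h' h⟩
    choose Tf hTdep hTsat using H
    set C0 : ℕ := cntL (fun j => φ.sat (List.replicate x none) j) x with hC0
    refine ⟨((List.range x).map (fun s'' => TLTerm.countL (Tf s''))).foldr .add .one,
      ((List.range x).filter (fun s'' => decide (s < s''))).map Tf, C0, 1, ?_, ?_, ?_⟩
    · apply depth_foldr
      intro t' ht'
      rw [List.mem_map] at ht'
      obtain ⟨s'', _, rfl⟩ := ht'
      show (Tf s'').depth + 1 ≤ φ.depth + 1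
      exact Nat.succ_le_succ (hTdep s'')
    · intro χ hχ
      rw [List.mem_map] at hχ
      obtain ⟨s'', _, rfl⟩ := hχ
      show (Tf s'').depth ≤ φ.depth + 1
      exact le_trans (hTdep s'') (Nat.le_succ _)
    · intro w q hq1 hq2
      set A : ℕ → Bool := fun j => φ.sat (fembed x w) j with hA
      set BB : ℕ → ℕ → Bool := fun s'' q'' => (Tf s'').sat w q'' with hBB
      have hqq : q * x = (q - 1) * x + x := by
        conv_lhs => rw [show q = (q - 1) + 1 by omega]
        rw [Nat.succ_mul]
      -- value of the count term
      have hval : YTerm.val (.countL φ) (fembed x w) (q * x + s) = cntL A (q * x + s + 1) := rfl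
      have h_i1 : q * x + s + 1 = x + ((q - 1) * x + s + 1) := by omega
      have c2 : cntL A x = C0 := cntL_congr (fun j hj => block0_const x φ w j hj)
      have hg : ∀ j < w.length * x, A (x + j) = BB (j % x) (j / x) := by
        intro j hj
        have hjx : j % x < x := Nat.mod_lt _ (by omega)
        have hdm := Nat.div_add_mod j x
        have hcm : (j / x) * x = x * (j / x) := Nat.mul_comm _ _
        have hjq : j / x < w.length := by
          rw [Nat.div_lt_iff_lt_mul (by omega : 0 < x)]
          exact hj
        have hidx : x + j = (j / x + 1) * x + j % x := by
          rw [Nat.succ_mul]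
          omega
        simp only [hA, hBB]
        rw [hidx, hTsat (j % x) w (j / x + 1) (Nat.le_add_left 1 _)
          (Nat.succ_le_of_lt hjq) hjx]
        simp
      have hmle : (q - 1) * x + s + 1 ≤ w.length * x := by
        have h2 : q * x ≤ w.length * x := Nat.mul_le_mul_right x hq2
        omega
      have c3 : cntL (fun j => A (x + j)) ((q - 1) * x + s + 1)
          = ∑ s'' ∈ Finset.range x, cntL (BB s'') (if s'' ≤ s then q else q - 1) := by
        rw [cnt_decomp hx (fun j => A (x + j)) BB hg _ hmle]
        exact Finset.sum_congr rfl (fun s'' hs'' => by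
          rw [e_block hx q s s'' hq1 hs (Finset.mem_range.mp hs'')])
      have c1 : cntL A (q * x + s + 1)
          = C0 + ∑ s'' ∈ Finset.range x, cntL (BB s'') (if s'' ≤ s then q else q - 1) := by
        rw [h_i1, cntL_add, c2, c3]
      -- the correction count
      have hcorr : ((((List.range x).filter (fun s'' => decide (s < s''))).map Tf).filter
            (fun χ => χ.sat w (q-1))).length
          = ∑ s'' ∈ Finset.range x,
              (if (BB s'' (q - 1) && decide (s < s'')) = true then 1 else 0) := by
        rw [List.filter_map, List.length_map, List.filter_filter]
        rw [show ((List.range x).filter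
            (fun s'' => ((fun χ => χ.sat w (q-1)) ∘ Tf) s'' && decide (s < s''))).length
          = cntL (fun s'' => ((fun χ => χ.sat w (q-1)) ∘ Tf) s'' && decide (s < s'')) x from rfl]
        rw [cntL_eq_sum]
        exact Finset.sum_congr rfl (fun s'' _ => by simp only [Function.comp, hBB])
      -- the value of tp
      have hval_tp : (((List.range x).map (fun s'' => TLTerm.countL (Tf s''))).foldr
            TLTerm.add TLTerm.one).val w (q - 1)
          = (∑ s'' ∈ Finset.range x, cntL (BB s'') q) + 1 := by
        rw [val_foldr, List.map_map]
        rw [show (List.map ((fun t => t.val w (q-1)) ∘ fun s'' => TLTerm.countL (Tf s''))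
            (List.range x)) = (List.range x).map (fun s'' => cntL (BB s'') q) from ?_]
        · rw [listsum_range]
        · apply List.map_congr_left
          intro s'' _
          show TLTerm.val (.countL (Tf s'')) w (q-1) = _
          rw [val_countL_eq]
          congr 1
          omega
      rw [hval, c1, hcorr, hval_tp]
      have hptwise : ∀ s'' ∈ Finset.range x,
          cntL (BB s'') (if s'' ≤ s then q else q - 1)
            + (if (BB s'' (q - 1) && decide (s < s'')) = true then 1 else 0)
          = cntL (BB s'') q := by
        intro s'' _
        by_cases hc' : s'' ≤ s
        · rw [if_pos hc', if_neg ?_, Nat.add_zero]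
          simp only [Bool.and_eq_true, decide_eq_true_eq]
          rintro ⟨-, h⟩
          omega
        · rw [if_neg hc']
          have hq' : q = (q - 1) + 1 := by omega
          conv_rhs => rw [hq']
          rw [cntL_succ]
          congr 1
          simp only [Bool.and_eq_true, decide_eq_true_eq]
          by_cases hb : BB s'' (q - 1) = true
          · rw [if_pos ⟨hb, by omega⟩, if_pos hb]
          · rw [if_neg (by tauto), if_neg hb]
      have hsum : ∑ s'' ∈ Finset.range x, cntL (BB s'') (if s'' ≤ s then q else q - 1)
            + ∑ s'' ∈ Finset.range x,
                (if (BB s'' (q - 1) && decide (s < s'')) = true then 1 else 0)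
          = ∑ s'' ∈ Finset.range x, cntL (BB s'') q := by
        rw [← Finset.sum_add_distrib]
        exact Finset.sum_congr rfl hptwise
      omega
end

end Main
end Stmt17Aux
/-- For every TL[#←,Y,MOD] formula `φ` of depth at most `k` over the alphabet
`Σ ∪ {e}`, there are an integer `x ≥ 1` and a TL[#←] formula `φ'` of depth at most `k`
over `Σ` such that for all nonempty `w ∈ Σ*`, `f(w) ⊨ φ` iff `w ⊨ φ'`. -/
theorem stmt17 (σ : Type) [Fintype σ] [DecidableEq σ] (k : ℕ)
    (φ : YFormula (Option σ)) (hφ : φ.depth ≤ k) :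
    ∃ x : ℕ, 1 ≤ x ∧ ∃ φ' : TLFormula σ, φ'.depth ≤ k ∧
      ∀ w : List σ, w ≠ [] →
        (YFormula.sat φ (fembed x w) ((fembed x w).length - 1) = true ↔
          TLFormula.sat φ' w (w.length - 1) = true) := by
  classical
  open Stmt17Aux in
  set ψ := ynfF φ with hψ
  set M := modMF ψ with hM
  set R := rmaxF ψ with hR
  set B := yheightF ψ with hBdef
  set x := M * (R + B + 1) with hxdef
  have hM1 : 1 ≤ M := modMF_pos ψ
  have hx1 : 1 ≤ x := Nat.one_le_iff_ne_zero.2 (Nat.mul_ne_zero (by omega) (by omega))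
  have hxge : R + B + 1 ≤ x := Nat.le_mul_of_pos_left _ (by omega)
  have hB : B < x := by omega
  have hcond : condF x B ψ := condF_of ψ x B ⟨R + B + 1, rfl⟩ (by omega)
  obtain ⟨T, hd, hsat⟩ :=
    mainF x B hx1 hB ψ (ynfF_ynf φ) hcond (le_refl B) (x - 1) (by omega)
  refine ⟨x, hx1, T, ?_, ?_⟩
  · calc T.depth ≤ ψ.depth := hd
    _ = φ.depth := ynfF_depth φ
    _ ≤ k := hφ
  · intro w hw
    have hn : 1 ≤ w.length := List.length_pos_iff.mpr hw
    have hlen : (fembed x w).length = x + w.length * x := fembed_length x hx1 w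
    have hidx : (fembed x w).length - 1 = w.length * x + (x - 1) := by
      rw [hlen]; omega
    rw [hidx, ← ynfF_sat φ (fembed x w) (w.length * x + (x - 1))]
    rw [show ynfF φ = ψ from rfl]
    rw [hsat w w.length hn (le_refl _)]
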